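/- As formal power series, the substitution of s = −q and t = −1 in the Quintuple Product Identity yields ∏_{n≥1}(1−(−q)^n)(1+(−q)^n)(1+(−q)^{n−1})(1+q^{2n−1})² = 2·(q²;q²)_∞³/((q;q)_∞(q⁴;q⁴)_∞). -/

import Mathlib

set_option maxHeartbeats 1000000


open scoped Classical

/-- The formal power series ∏_{n≥1} (1 - q^(c·n)), i.e. (q^c; q^c)_∞.
The d-th coefficient of the infinite product agrees with that of the partial product
over the first d+1 factors, since all later factors are 1 + O(q^(d+1)). -/
noncomputable def euler (c : ℕ) : PowerSeries ℤ :=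
  PowerSeries.mk fun d =>
    PowerSeries.coeff d
      (∏ n ∈ Finset.range (d + 1), (1 - (PowerSeries.X : PowerSeries ℤ) ^ (c * (n + 1))))

/-- The multiplicative inverse of (q^c; q^c)_∞ (its constant coefficient is 1). -/
noncomputable def eulerInv (c : ℕ) : PowerSeries ℤ := (euler c).invOfUnit 1

/-- The product ∏_{n≥1}(1−(−q)^n)(1+(−q)^n)(1+(−q)^(n−1))(1+q^(2n−1))², obtained by putting
s = −q, t = −1 in the quintuple product; coefficients stabilize in the partial products. -/
noncomputable def quintupleLHS : PowerSeries ℤ :=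
  PowerSeries.mk fun d =>
    PowerSeries.coeff d
      (∏ n ∈ Finset.range (d + 1),
        ((1 - (-(PowerSeries.X : PowerSeries ℤ)) ^ (n + 1)) *
          (1 + (-(PowerSeries.X : PowerSeries ℤ)) ^ (n + 1)) *
          (1 + (-(PowerSeries.X : PowerSeries ℤ)) ^ n) *
          (1 + (PowerSeries.X : PowerSeries ℤ) ^ (2 * (n + 1) - 1)) ^ 2))


noncomputable section QPIsection
namespace QPI
open PowerSeries Finset

abbrev R := PowerSeries ℤ

/-- prod of factors each ≡ 1 mod X^k is ≡ 1 mod X^k -/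
lemma prod_sub_one_dvd {k : ℕ} {s : Finset ℕ} {F : ℕ → R}
    (h : ∀ n ∈ s, (X : R) ^ k ∣ F n - 1) : (X : R) ^ k ∣ (∏ n ∈ s, F n) - 1 := by
  induction s using Finset.induction with
  | empty => simp
  | @insert a s' hn ih =>
    rw [Finset.prod_insert hn]
    have h1 : (X : R) ^ k ∣ F a - 1 := h a (mem_insert_self a s')
    have h2 : (X : R) ^ k ∣ (∏ n ∈ s', F n) - 1 := ih fun n hns => h n (mem_insert_of_mem hns)
    have : F a * ∏ n ∈ s', F n - 1 = (F a - 1) * ∏ n ∈ s', F n + ((∏ n ∈ s', F n) - 1) := by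
      ring
    rw [this]
    exact dvd_add (h1.mul_right _) h2

def limProd (F : ℕ → R) : R :=
  PowerSeries.mk fun d => PowerSeries.coeff d (∏ n ∈ Finset.range (d + 1), F n)

def Tame (F : ℕ → R) : Prop := ∀ n, (X : R) ^ n ∣ F n - 1

lemma coeff_eq_of_dvd {d k : ℕ} {f g : R} (hdk : d < k) (h : (X : R) ^ k ∣ f - g) :
    PowerSeries.coeff d f = PowerSeries.coeff d g := by
  have := (PowerSeries.X_pow_dvd_iff.mp h) d hdk
  have h2 : PowerSeries.coeff d (f - g) = 0 := this
  rw [map_sub] at h2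
  linarith

lemma coeff_limProd {F : ℕ → R} (hF : Tame F) {d : ℕ} {s : Finset ℕ}
    (hs : Finset.range (d + 1) ⊆ s) :
    PowerSeries.coeff d (limProd F) = PowerSeries.coeff d (∏ n ∈ s, F n) := by
  rw [limProd, PowerSeries.coeff_mk]
  apply coeff_eq_of_dvd (Nat.lt_succ_self d)
  rw [← Finset.prod_sdiff hs]
  have hdvd : (X : R) ^ (d + 1) ∣ (∏ n ∈ s \ Finset.range (d + 1), F n) - 1 := by
    apply prod_sub_one_dvd
    intro n hn
    have hn' : d + 1 ≤ n := by
      have := (Finset.mem_sdiff.mp hn).2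
      simpa using this
    exact dvd_trans (pow_dvd_pow _ hn') (hF n)
  obtain ⟨u, hu⟩ := hdvd
  have : (∏ n ∈ Finset.range (d+1), F n) - (∏ n ∈ s \ Finset.range (d + 1), F n) * ∏ n ∈ Finset.range (d+1), F n
      = - (X ^ (d+1) * u * ∏ n ∈ Finset.range (d+1), F n) := by
    have h1 : (∏ n ∈ s \ Finset.range (d + 1), F n) = 1 + X ^ (d+1) * u := by
      rw [← hu]; ring
    rw [h1]; ring
  rw [this]
  exact (Dvd.dvd.mul_right (Dvd.dvd.mul_right (dvd_rfl (a := (X:R)^(d+1))) u) _).neg_right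

lemma limProd_mul {F G : ℕ → R} (hF : Tame F) (hG : Tame G) :
    limProd F * limProd G = limProd (fun n => F n * G n) := by
  ext d
  rw [PowerSeries.coeff_mul]
  conv_rhs => rw [limProd, PowerSeries.coeff_mk]
  rw [Finset.prod_mul_distrib, PowerSeries.coeff_mul]
  apply Finset.sum_congr rfl
  intro p hp
  have hp1 : p.1 ≤ d := Finset.HasAntidiagonal.antidiagonal.fst_le hp
  have hp2 : p.2 ≤ d := Finset.HasAntidiagonal.antidiagonal.snd_le hp
  rw [coeff_limProd hF (show Finset.range (p.1+1) ⊆ Finset.range (d+1) from Finset.range_subset_range.mpr (by omega)),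
      coeff_limProd hG (show Finset.range (p.2+1) ⊆ Finset.range (d+1) from Finset.range_subset_range.mpr (by omega))]


lemma tame_def {F : ℕ → R} : Tame F ↔ ∀ n, (X : R) ^ n ∣ F n - 1 := Iff.rfl

lemma limProd_def (F : ℕ → R) : limProd F =
    PowerSeries.mk fun d => PowerSeries.coeff d (∏ n ∈ Finset.range (d + 1), F n) := rfl

-- real content starts
def glp (g : ℕ → ℤ) : R := limProd (fun m => 1 + PowerSeries.C (g m) * X ^ m)

lemma tame_expform {e : ℕ → ℕ} (he : ∀ n, n ≤ e n) (c : ℕ → ℤ) :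
    Tame (fun n => 1 + PowerSeries.C (c n) * X ^ e n) := by
  rw [tame_def]
  intro n
  simp only [add_sub_cancel_left]
  exact Dvd.dvd.mul_left (pow_dvd_pow _ (he n)) _

lemma tame_glp (g : ℕ → ℤ) : Tame (fun m => 1 + PowerSeries.C (g m) * X ^ m) :=
  tame_expform (fun n => le_rfl) g

lemma limProd_reindex (e : ℕ → ℕ) (he : StrictMono e) (c g : ℕ → ℤ)
    (h1 : ∀ n, g (e n) = c n) (h2 : ∀ m, (∀ n, e n ≠ m) → g m = 0) :
    limProd (fun n => 1 + PowerSeries.C (c n) * X ^ e n) = glp g := by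
  have hle : ∀ n, n ≤ e n := fun n => he.le_apply
  ext d
  set t : Finset ℕ := (Finset.range (d+1)).filter (fun n => e n < d + 1) with ht
  have hL : PowerSeries.coeff d (limProd (fun n => 1 + PowerSeries.C (c n) * X ^ e n))
      = PowerSeries.coeff d (∏ n ∈ t, (1 + PowerSeries.C (c n) * X ^ e n)) := by
    rw [coeff_limProd (tame_expform hle c) (le_refl _)]
    rw [← Finset.prod_filter_mul_prod_filter_not (Finset.range (d+1)) (fun n => e n < d + 1)]
    apply coeff_eq_of_dvd (Nat.lt_succ_self d)
    have hdvd : (X : R) ^ (d+1) ∣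
        (∏ n ∈ (Finset.range (d+1)).filter (fun n => ¬ e n < d + 1),
          (1 + PowerSeries.C (c n) * X ^ e n)) - 1 := by
      apply prod_sub_one_dvd
      intro n hn
      have : d + 1 ≤ e n := by
        have := (Finset.mem_filter.mp hn).2
        omega
      simp only [add_sub_cancel_left]
      exact Dvd.dvd.mul_left (pow_dvd_pow _ this) _
    obtain ⟨u, hu⟩ := hdvd
    have heq : (∏ n ∈ (Finset.range (d+1)).filter (fun n => ¬ e n < d + 1),
          (1 + PowerSeries.C (c n) * X ^ e n)) = 1 + X ^ (d+1) * u := by rw [← hu]; ring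
    rw [heq]
    have : (∏ n ∈ t, (1 + PowerSeries.C (c n) * X ^ e n)) * (1 + X ^ (d+1) * u)
        - ∏ n ∈ t, (1 + PowerSeries.C (c n) * X ^ e n)
        = X ^ (d+1) * (u * ∏ n ∈ t, (1 + PowerSeries.C (c n) * X ^ e n)) := by ring
    rw [this]
    exact Dvd.intro _ rfl
  have hR : PowerSeries.coeff d (glp g)
      = PowerSeries.coeff d (∏ n ∈ t, (1 + PowerSeries.C (c n) * X ^ e n)) := by
    rw [glp, coeff_limProd (tame_glp g) (le_refl _)]
    have hfil : ∏ m ∈ (Finset.range (d+1)).filter (fun m => ∃ n, e n = m),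
        (1 + PowerSeries.C (g m) * X ^ m) = ∏ m ∈ Finset.range (d+1),
        (1 + PowerSeries.C (g m) * X ^ m) := by
      apply Finset.prod_filter_of_ne
      intro m _ hne
      by_contra hc
      push_neg at hc
      apply hne
      rw [h2 m hc]
      simp
    rw [← hfil]
    have himg : (Finset.range (d+1)).filter (fun m => ∃ n, e n = m) = t.image e := by
      ext m
      simp only [Finset.mem_filter, Finset.mem_range, Finset.mem_image, ht]
      constructor
      · rintro ⟨hm, n, rfl⟩
        exact ⟨n, ⟨by have := hle n; omega, hm⟩, rfl⟩
      · rintro ⟨n, ⟨hn1, hn2⟩, rfl⟩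
        exact ⟨hn2, n, rfl⟩
    rw [himg, Finset.prod_image (fun x _ y _ h => he.injective h)]
    apply congrArg
    apply Finset.prod_congr rfl
    intro n _
    rw [h1]
  rw [hL, hR]

lemma glp_mul_disjoint {g h : ℕ → ℤ} (hd : ∀ m, g m * h m = 0) :
    glp g * glp h = glp (fun m => g m + h m) := by
  rw [glp, glp, limProd_mul (tame_glp g) (tame_glp h), glp]
  apply congrArg
  funext m
  have : (1 + PowerSeries.C (g m) * X ^ m) * (1 + PowerSeries.C (h m) * X ^ m)
      = 1 + PowerSeries.C (g m + h m) * X ^ m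
        + PowerSeries.C (g m * h m) * (X ^ m * X ^ m) := by
    simp only [map_add, map_mul]; ring
  rw [this, hd m]
  simp

lemma glp_mul_conj (g : ℕ → ℤ) :
    glp g * glp (fun m => - g m) = glp (fun m => if m % 2 = 0 then - (g (m/2))^2 else 0) := by
  rw [glp, glp, limProd_mul (tame_glp g) (tame_glp _)]
  have heq : (fun m => (1 + PowerSeries.C (g m) * X ^ m) *
      (1 + PowerSeries.C (- g m) * X ^ m))
      = fun m => 1 + PowerSeries.C (- (g m)^2) * X ^ (2 * m) := by
    funext m
    have : X ^ (2*m) = (X : R) ^ m * X ^ m := by rw [← pow_add]; ring_nf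
    rw [this]
    simp only [map_neg, map_pow]
    ring
  rw [heq]
  apply limProd_reindex (fun m => 2 * m) (fun a b h => by dsimp only; omega) _ _
  · intro n
    simp only [Nat.mul_mod_right, if_pos rfl]
    have h2n : 2 * n / 2 = n := by omega
    rw [h2n]
    simp
  · intro m hm
    rw [if_neg]
    intro hc
    exact hm (m / 2) (by omega)

lemma glp_def (g : ℕ → ℤ) : glp g = limProd (fun m => 1 + PowerSeries.C (g m) * X ^ m) := rfl

-- coefficient functions
def cOdd (m : ℕ) : ℤ := if m % 2 = 1 then 1 else 0
def bE (m : ℕ) : ℤ := if m % 2 = 0 ∧ m ≠ 0 then 1 else 0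
def b0 (m : ℕ) : ℤ := if m = 0 then 1 else 0
def bfun (m : ℕ) : ℤ := (-1) ^ m
def aZ (c m : ℕ) : ℤ := if m % c = 0 ∧ m ≠ 0 then -1 else 0
def d1 (m : ℕ) : ℤ := if m % 4 = 2 then -1 else 0

lemma tame_tail {c : ℕ} (hc : 0 < c) :
    Tame (fun n => 1 + PowerSeries.C (-1) * X ^ (c * (n+1))) :=
  tame_expform (fun n => by nlinarith) _

lemma sub_form (k : ℕ) : (1 : R) - X ^ k = 1 + PowerSeries.C (-1) * X ^ k := by
  rw [map_neg, map_one]; ring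

lemma euler_eq_limProd (c : ℕ) :
    euler c = limProd (fun n => 1 + PowerSeries.C (-1) * X ^ (c * (n+1))) := by
  rw [limProd_def, euler]
  refine congrArg PowerSeries.mk (funext fun d => ?_)
  refine congrArg (PowerSeries.coeff d) (Finset.prod_congr rfl fun n _ => ?_)
  rw [sub_form]

lemma euler_eq_glp (c : ℕ) (hc : 0 < c) : euler c = glp (aZ c) := by
  rw [euler_eq_limProd]
  apply limProd_reindex (fun n => c * (n+1)) (fun a b h => by dsimp only; nlinarith) _ _
  · intro n
    show aZ c (c * (n + 1)) = -1
    rw [aZ, if_pos ⟨by simp [Nat.mul_mod_right], by positivity⟩]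
  · intro m hm
    rw [aZ, if_neg]
    rintro ⟨hmod, hne⟩
    have hdvd : c ∣ m := Nat.dvd_of_mod_eq_zero hmod
    obtain ⟨k, rfl⟩ := hdvd
    have hk : 1 ≤ k := by
      rcases Nat.eq_zero_or_pos k with h | h
      · exfalso; apply hne; rw [h, Nat.mul_zero]
      · exact h
    exact hm (k - 1) (by show c * (k - 1 + 1) = c * k; congr 1; omega)

-- decomposition of quintupleLHS
lemma quintuple_decomp :
    quintupleLHS = glp (aZ 2) * (glp bfun * (glp cOdd * glp cOdd)) := by
  have t2 : Tame (fun n => 1 + PowerSeries.C (-1) * X ^ (2 * (n+1))) := tame_tail (by norm_num)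
  have t3 : Tame (fun n => 1 + PowerSeries.C (bfun n) * X ^ n) := tame_glp bfun
  have t5 : Tame (fun n => 1 + PowerSeries.C (1) * X ^ (2 * n + 1)) :=
    tame_expform (fun n => by omega) _
  have t55 : Tame (fun n => (1 + PowerSeries.C (1) * X ^ (2 * n + 1)) *
      (1 + PowerSeries.C (1) * X ^ (2 * n + 1))) := by
    rw [tame_def]
    intro n
    have h5 := (tame_def.mp t5) n
    have : (1 + PowerSeries.C (1 : ℤ) * X ^ (2 * n + 1)) *
      (1 + PowerSeries.C (1 : ℤ) * X ^ (2 * n + 1)) - 1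
      = ((1 + PowerSeries.C (1 : ℤ) * X ^ (2 * n + 1)) - 1) *
        (1 + PowerSeries.C (1 : ℤ) * X ^ (2 * n + 1))
        + ((1 + PowerSeries.C (1 : ℤ) * X ^ (2 * n + 1)) - 1) := by ring
    rw [this]
    exact dvd_add (h5.mul_right _) h5
  have t355 : Tame (fun n => (1 + PowerSeries.C (bfun n) * X ^ n) *
      ((1 + PowerSeries.C (1) * X ^ (2 * n + 1)) *
       (1 + PowerSeries.C (1) * X ^ (2 * n + 1)))) := by
    rw [tame_def]
    intro n
    have h3 := (tame_def.mp t3) n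
    have h55 := (tame_def.mp t55) n
    set A := (1 + PowerSeries.C (bfun n) * X ^ n)
    set B := (1 + PowerSeries.C (1 : ℤ) * X ^ (2 * n + 1)) *
       (1 + PowerSeries.C (1 : ℤ) * X ^ (2 * n + 1))
    have : A * B - 1 = (A - 1) * B + (B - 1) := by ring
    rw [this]
    exact dvd_add (h3.mul_right _) h55
  have key : glp (aZ 2) * (glp bfun * (glp cOdd * glp cOdd)) = quintupleLHS := by
    have e2 : glp (aZ 2) = limProd (fun n => 1 + PowerSeries.C (-1) * X ^ (2 * (n+1))) := by
      rw [← euler_eq_limProd, euler_eq_glp 2 (by norm_num)]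
    have e5 : glp cOdd = limProd (fun n => 1 + PowerSeries.C (1) * X ^ (2 * n + 1)) := by
      rw [← limProd_reindex (fun n => 2 * n + 1) (fun a b h => by dsimp only; omega) (fun _ => 1) cOdd]
      · intro n
        show cOdd (2 * n + 1) = 1
        rw [cOdd, if_pos (by omega)]
      · intro m hm
        rw [cOdd, if_neg]
        intro hc
        exact hm (m / 2) (by show 2 * (m/2) + 1 = m; omega)
    rw [e2, e5, glp_def, limProd_mul t5 t5, limProd_mul t3 t55, limProd_mul t2 t355,
      quintupleLHS, limProd_def]
    refine congrArg PowerSeries.mk (funext fun d => ?_)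
    refine congrArg (PowerSeries.coeff d) (Finset.prod_congr rfl fun n _ => ?_)
    have hodd : 2 * (n + 1) - 1 = 2 * n + 1 := by omega
    rw [hodd]
    have hsq : ((-X : R)) ^ (n+1) * (-X) ^ (n+1) = X ^ (2 * (n+1)) := by
      rw [← pow_add, Even.neg_pow ⟨n+1, by ring⟩]
      congr 1
      ring
    have h12 : (1 - (-X : R) ^ (n+1)) * (1 + (-X) ^ (n+1))
        = 1 + PowerSeries.C (-1) * X ^ (2 * (n+1)) := by
      have expand : (1 - (-X : R) ^ (n+1)) * (1 + (-X) ^ (n+1))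
          = 1 - (-X) ^ (n+1) * (-X) ^ (n+1) := by ring
      rw [expand, hsq, sub_form]
    have h3 : (1 + (-X : R) ^ n) = 1 + PowerSeries.C (bfun n) * X ^ n := by
      rw [neg_pow]
      congr 1
      congr 1
      rw [bfun, map_pow, map_neg, map_one]
    have h5 : (1 + (X : R) ^ (2 * n + 1)) ^ 2
        = (1 + PowerSeries.C (1) * X ^ (2 * n + 1)) *
          (1 + PowerSeries.C (1) * X ^ (2 * n + 1)) := by
      rw [map_one, one_mul, sq]
    rw [← h12, ← h3, ← h5]
    ring
  exact key.symm

-- splits and merges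
lemma split_b : glp b0 * (glp bE * glp (fun m => -cOdd m)) = glp bfun := by
  rw [glp_mul_disjoint (g := bE) (h := fun m => -cOdd m)
      (fun m => by simp only [bE, cOdd]; split_ifs <;> simp <;> omega)]
  rw [glp_mul_disjoint (fun m => by simp only [b0, bE, cOdd]; split_ifs <;> simp <;> omega)]
  refine congrArg glp (funext fun m => ?_)
  simp only [b0, bE, cOdd, bfun]
  rcases Nat.even_or_odd m with h | h
  · have he := Nat.even_iff.mp h
    rcases Nat.eq_zero_or_pos m with h0 | h0
    · subst h0; norm_num
    · rw [if_neg (by omega), if_pos ⟨by omega, by omega⟩,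
        if_neg (by omega), h.neg_one_pow]
      ring
  · have ho := Nat.odd_iff.mp h
    rw [if_neg (by omega), if_neg (by omega),
      if_pos ho, h.neg_one_pow]
    ring

lemma split_a1 : glp (fun m => -cOdd m) * glp (fun m => -bE m) = glp (aZ 1) := by
  rw [glp_mul_disjoint (fun m => by simp only [bE, cOdd]; split_ifs <;> simp <;> omega)]
  refine congrArg glp (funext fun m => ?_)
  simp only [bE, cOdd, aZ]
  split_ifs <;> omega

lemma merge_cOdd : glp cOdd * glp (fun m => -cOdd m) = glp d1 := by
  rw [glp_mul_conj cOdd]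
  refine congrArg glp (funext fun m => ?_)
  simp only [cOdd, d1]
  split_ifs <;> first | (exfalso; omega) | norm_num

lemma merge_bE : glp bE * glp (fun m => -bE m) = glp (aZ 4) := by
  rw [glp_mul_conj bE]
  refine congrArg glp (funext fun m => ?_)
  simp only [bE, aZ]
  split_ifs <;> first | (exfalso; omega) | norm_num

lemma merge_d1a4 : glp d1 * glp (aZ 4) = glp (aZ 2) := by
  rw [glp_mul_disjoint (fun m => by simp only [d1, aZ]; split_ifs <;> simp <;> omega)]
  refine congrArg glp (funext fun m => ?_)
  simp only [d1, aZ]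
  split_ifs <;> omega

lemma glp_b0 : glp b0 = 2 := by
  ext d
  rw [glp_def, limProd_def, PowerSeries.coeff_mk]
  have : ∏ m ∈ Finset.range (d+1), (1 + PowerSeries.C (b0 m) * X ^ m) = 2 := by
    rw [Finset.prod_eq_single_of_mem 0 (by simp)]
    · simp only [b0]; norm_num
    · intro m _ hm
      rw [b0, if_neg hm]
      simp
  rw [this]

-- assembly
lemma constCoeff_euler (c : ℕ) (hc : 0 < c) : PowerSeries.constantCoeff (euler c) = 1 := by
  have : PowerSeries.constantCoeff (euler c) = PowerSeries.coeff 0 (euler c) := by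
    rw [PowerSeries.coeff_zero_eq_constantCoeff]
  rw [this, euler, PowerSeries.coeff_mk, Finset.prod_range_one]
  simp [PowerSeries.coeff_zero_eq_constantCoeff, hc.ne']

lemma euler_mul_inv (c : ℕ) (hc : 0 < c) : euler c * eulerInv c = 1 := by
  rw [eulerInv]
  exact PowerSeries.mul_invOfUnit _ 1 (by rw [constCoeff_euler c hc]; rfl)

lemma euler_ne_zero (c : ℕ) (hc : 0 < c) : euler c ≠ 0 := by
  intro h
  have := constCoeff_euler c hc
  rw [h] at this
  simp at this


end QPI
end QPIsection

open QPI in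
theorem quintuple_product_at_minusq :
    quintupleLHS = 2 * (euler 2) ^ 3 * eulerInv 1 * eulerInv 4 := by
  have hne : euler 1 * euler 4 ≠ 0 :=
    mul_ne_zero (euler_ne_zero 1 (by norm_num)) (euler_ne_zero 4 (by norm_num))
  apply mul_right_cancel₀ hne
  have hrhs : 2 * (euler 2) ^ 3 * eulerInv 1 * eulerInv 4 * (euler 1 * euler 4)
      = 2 * (euler 2) ^ 3 := by
    have : 2 * (euler 2) ^ 3 * eulerInv 1 * eulerInv 4 * (euler 1 * euler 4)
        = 2 * (euler 2) ^ 3 * (euler 1 * eulerInv 1) * (euler 4 * eulerInv 4) := by ring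
    rw [this, euler_mul_inv 1 (by norm_num), euler_mul_inv 4 (by norm_num)]
    ring
  rw [hrhs, quintuple_decomp, euler_eq_glp 1 (by norm_num), euler_eq_glp 4 (by norm_num),
    euler_eq_glp 2 (by norm_num), ← split_b, ← split_a1, ← glp_b0, ← merge_d1a4,
    ← merge_cOdd, ← merge_bE]
  ring
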